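/- Let {M₁, M₂} be a two-outcome POVM in dimension d such that λmin(M₁) + λmax(M₁) ≤ λmin(M₂) + λmax(M₂), where λmin(·) and λmax(·) denote the smallest and largest eigenvalues of a Hermitian matrix. Then P*_guess({M₁,M₂}) ≤ 1 − (1/2)·(√(λmax(M₁)) − √(λmin(M₁)))²; that is, there exists a unit vector φ ∈ ℂ^d such that every valid decomposition K of {M₁,M₂} satisfies ∑_j ⟪φ, (K j j)·φ⟫ ≤ 1 − (1/2)·(√(λmax(M₁)) − √(λmin(M₁)))². -/

import Mathlib

open Matrix ComplexOrder

noncomputable section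

/-- `K` is a valid decomposition of the POVM `M`. -/
def IsDecomp {m d : ℕ} (M : Fin m → Matrix (Fin d) (Fin d) ℂ)
    (K : Fin m → Fin m → Matrix (Fin d) (Fin d) ℂ) : Prop :=
  (∀ x j, (K x j).PosSemidef) ∧
  (∀ j, (d : ℂ) • ∑ x, K x j = (∑ x, (K x j).trace) • (1 : Matrix (Fin d) (Fin d) ℂ)) ∧
  (∀ x, ∑ j, K x j = M x)

/-- Eve's objective for the decomposition `K` and the state `φ`:
`∑_j ⟪φ, (K j j) φ⟫`. -/
def objective {m d : ℕ} (K : Fin m → Fin m → Matrix (Fin d) (Fin d) ℂ)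
    (φ : Fin d → ℂ) : ℝ :=
  ∑ j, (star φ ⬝ᵥ (K j j).mulVec φ).re

private lemma le_of_sq_le_sq' {x y : ℝ} (h : x^2 ≤ y^2) (hy : 0 ≤ y) : x ≤ y := by
  nlinarith [sq_nonneg (x - y), sq_nonneg (x + y)]

private lemma psd_re_nonneg {d : ℕ} {X : Matrix (Fin d) (Fin d) ℂ} (hX : X.PosSemidef)
    (x : Fin d → ℂ) : 0 ≤ (star x ⬝ᵥ X.mulVec x).re := by
  have h := hX.dotProduct_mulVec_nonneg x
  exact (Complex.le_def.mp h).1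

private lemma quad_re {d : ℕ} (X : Matrix (Fin d) (Fin d) ℂ) (u v : Fin d → ℂ) (t : ℝ) :
    (star ((t:ℂ) • u + v) ⬝ᵥ X.mulVec ((t:ℂ) • u + v)).re
      = (star u ⬝ᵥ X.mulVec u).re * (t*t)
        + ((star u ⬝ᵥ X.mulVec v).re + (star v ⬝ᵥ X.mulVec u).re) * t
        + (star v ⬝ᵥ X.mulVec v).re := by
  simp only [star_add, star_smul, Matrix.mulVec_add, Matrix.mulVec_smul, dotProduct_add,
    add_dotProduct, smul_dotProduct, dotProduct_smul, smul_eq_mul, Complex.add_re,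
    Complex.star_def, Complex.conj_ofReal]
  simp only [Complex.add_re, Complex.mul_re, Complex.ofReal_re, Complex.ofReal_im,
    Complex.mul_im]
  ring

private lemma cs_of_psd {d : ℕ} {X : Matrix (Fin d) (Fin d) ℂ} (hX : X.PosSemidef)
    (u v : Fin d → ℂ) :
    ((star u ⬝ᵥ X.mulVec v).re + (star v ⬝ᵥ X.mulVec u).re)^2
      ≤ 4 * ((star u ⬝ᵥ X.mulVec u).re * (star v ⬝ᵥ X.mulVec v).re) := by
  have h := discrim_le_zero (a := (star u ⬝ᵥ X.mulVec u).re)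
    (b := (star u ⬝ᵥ X.mulVec v).re + (star v ⬝ᵥ X.mulVec u).re)
    (c := (star v ⬝ᵥ X.mulVec v).re) (fun t => by rw [← quad_re]; exact psd_re_nonneg hX _)
  unfold discrim at h
  linarith

private lemma trace_psd_nonneg {d : ℕ} {X : Matrix (Fin d) (Fin d) ℂ} (hX : X.PosSemidef) :
    0 ≤ X.trace := by
  rw [Matrix.trace]
  apply Finset.sum_nonneg
  intro i _
  have h := hX.dotProduct_mulVec_nonneg (Pi.single i 1)
  simpa [Matrix.mulVec_single, dotProduct, Pi.single_apply] using h

private lemma scalar_key {a b c₀ p q r : ℝ} (ha : 0 ≤ a) (hpa : p ≤ a) (hqb : q ≤ b)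
    (hp0 : 0 ≤ p) (hq0 : 0 ≤ q) (hpc : p ≤ c₀) (hqc : q ≤ c₀)
    (h1 : r ^ 2 ≤ p * q) (h2 : r ^ 2 ≤ (a - p) * (b - q))
    (h3 : r ^ 2 ≤ (c₀ - p) * (c₀ - q)) :
    p + q + 2 * r ≤ c₀ + Real.sqrt (a * b) := by
  have hb : 0 ≤ b := le_trans hq0 hqb
  set s := Real.sqrt (a*b) with hs
  set α := Real.sqrt (p*q) with hα
  set β := Real.sqrt ((a-p)*(b-q)) with hβ
  have hs2 : s^2 = a*b := Real.sq_sqrt (by positivity)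
  have hα2 : α^2 = p*q := Real.sq_sqrt (by positivity)
  have hβ2 : β^2 = (a-p)*(b-q) := Real.sq_sqrt (mul_nonneg (by linarith) (by linarith))
  have hs0 : 0 ≤ s := Real.sqrt_nonneg _
  have hα0 : 0 ≤ α := Real.sqrt_nonneg _
  have hβ0 : 0 ≤ β := Real.sqrt_nonneg _
  have hrα : r ≤ α := le_of_sq_le_sq' (by linarith) hα0
  have hrβ : r ≤ β := le_of_sq_le_sq' (by linarith) hβ0
  have hX : α*β ≤ (p*(b-q)+q*(a-p))/2 := by
    have h4 : (α*β)^2 = (p*(b-q))*(q*(a-p)) := by rw [mul_pow, hα2, hβ2]; ring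
    have h5 : 0 ≤ p*(b-q) := mul_nonneg hp0 (by linarith)
    have h6 : 0 ≤ q*(a-p) := mul_nonneg hq0 (by linarith)
    refine le_of_sq_le_sq' ?_ (by linarith)
    rw [h4]
    nlinarith [sq_nonneg (p*(b-q) - q*(a-p))]
  have hαβ : α + β ≤ s := by
    refine le_of_sq_le_sq' ?_ hs0
    rw [hs2]
    nlinarith [hα2, hβ2, hX]
  rcases le_or_gt c₀ s with hcs | hcs
  · have key : (2*r)^2 ≤ ((c₀-p)+(c₀-q))^2 := by nlinarith [sq_nonneg ((c₀-p)-(c₀-q))]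
    have h2r : 2*r ≤ (c₀-p)+(c₀-q) := le_of_sq_le_sq' key (by linarith)
    linarith
  · have hc0 : 0 < c₀ := lt_of_le_of_lt hs0 hcs
    have hmain : c₀ * (p + q + 2*r) ≤ c₀ * (c₀ + s) := by
      have hexp : c₀*(p+q) ≤ c₀^2 + p*q - r^2 := by nlinarith [h3]
      rcases le_or_gt (2*α) s with h2a | h2a
      · have h5 : α + r ≤ s := by linarith
        have hm1 : 0 ≤ (α - r)*(c₀ - (α+r)) :=
          mul_nonneg (by linarith) (by linarith)
        have hm2 : c₀*(α+r) ≤ c₀*s := mul_le_mul_of_nonneg_left h5 hc0.le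
        linarith [hm1, hm2, hexp, hα2]
      · have hαs : α ≤ s := by linarith
        have hw : r ≤ s - α := by linarith
        have hm1 : 0 ≤ ((s-α) - r)*(2*c₀ - (s-α) - r) :=
          mul_nonneg (by linarith) (by linarith)
        have hm2 : 0 ≤ (c₀ - s)*(2*α - s) := mul_nonneg (by linarith) (by linarith)
        linarith [hm1, hm2, hexp, hα2]
    exact le_of_mul_le_mul_left hmain hc0

private lemma sub_smul_one_posSemidef {d : ℕ} {N : Matrix (Fin d) (Fin d) ℂ}
    (hN : N.IsHermitian) (c : ℝ) (hc : ∀ i, c ≤ hN.eigenvalues i) :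
    (N - (c:ℂ) • 1).PosSemidef := by
  have hU : (hN.eigenvectorUnitary : Matrix (Fin d) (Fin d) ℂ) *
      star (hN.eigenvectorUnitary : Matrix (Fin d) (Fin d) ℂ) = 1 :=
    (Matrix.mem_unitaryGroup_iff).mp hN.eigenvectorUnitary.2
  have h1 : Matrix.diagonal (fun i => ((hN.eigenvalues i - c : ℝ) : ℂ))
      = Matrix.diagonal (RCLike.ofReal ∘ hN.eigenvalues) - (c:ℂ) • 1 := by
    rw [Matrix.smul_one_eq_diagonal, Matrix.diagonal_sub]
    funext i
    simp
  have key : (hN.eigenvectorUnitary : Matrix (Fin d) (Fin d) ℂ) *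
        Matrix.diagonal (fun i => ((hN.eigenvalues i - c : ℝ) : ℂ)) *
        star (hN.eigenvectorUnitary : Matrix (Fin d) (Fin d) ℂ)
      = N - (c:ℂ) • 1 := by
    rw [h1, Matrix.mul_sub, Matrix.mul_smul, Matrix.mul_one, Matrix.sub_mul, Matrix.smul_mul,
      hU]
    congr 1
    exact hN.spectral_theorem.symm
  rw [← key, Matrix.star_eq_conjTranspose]
  apply Matrix.PosSemidef.mul_mul_conjTranspose_same
  rw [Matrix.posSemidef_diagonal_iff]
  intro i
  exact_mod_cast Complex.zero_le_real.mpr (sub_nonneg.mpr (hc i))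

private lemma decomp_struct {d : ℕ} (hd : 0 < d) (M : Fin 2 → Matrix (Fin d) (Fin d) ℂ)
    (hsum : ∑ x, M x = 1) (K : Fin 2 → Fin 2 → Matrix (Fin d) (Fin d) ℂ)
    (hK : IsDecomp M K) :
    ∃ c₀ c₁ : ℝ, c₀ + c₁ = 1 ∧
      K 0 0 + K 1 0 = (c₀:ℂ) • 1 ∧
      K 0 1 + K 1 1 = (c₁:ℂ) • 1 ∧
      K 0 0 + K 0 1 = M 0 := by
  obtain ⟨hpsdK, hmix, hsumK⟩ := hK
  have hdne : (d:ℂ) ≠ 0 := Nat.cast_ne_zero.mpr hd.ne'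
  have hcj : ∀ j, K 0 j + K 1 j
      = ((((K 0 j).trace + (K 1 j).trace).re / d : ℝ) : ℂ) • 1 := by
    intro j
    have htj : (d:ℂ) • (K 0 j + K 1 j) = ((K 0 j).trace + (K 1 j).trace) • 1 := by
      simpa [Fin.sum_univ_two] using hmix j
    have htnn : 0 ≤ (K 0 j).trace + (K 1 j).trace :=
      add_nonneg (trace_psd_nonneg (hpsdK 0 j)) (trace_psd_nonneg (hpsdK 1 j))
    have him : ((K 0 j).trace + (K 1 j).trace).im = 0 := by
      have := (Complex.le_def.mp htnn).2
      simpa using this.symm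
    have hre : ((K 0 j).trace + (K 1 j).trace)
        = ((((K 0 j).trace + (K 1 j).trace).re : ℝ) : ℂ) :=
      Complex.ext (by simp) (by simp [him])
    have := congrArg (fun A => (d:ℂ)⁻¹ • A) htj
    simp only [smul_smul, inv_mul_cancel₀ hdne, one_smul] at this
    rw [this]
    congr 1
    conv_lhs => rw [hre]
    push_cast
    ring
  refine ⟨(((K 0 0).trace + (K 1 0).trace).re / d),
    (((K 0 1).trace + (K 1 1).trace).re / d), ?_, hcj 0, hcj 1, by
      simpa [Fin.sum_univ_two] using hsumK 0⟩
  have hall : (((((K 0 0).trace + (K 1 0).trace).re / d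
      + (((K 0 1).trace + (K 1 1).trace).re / d) : ℝ)) : ℂ) • (1 : Matrix (Fin d) (Fin d) ℂ)
      = 1 := by
    have h0 := hcj 0
    have h1 := hcj 1
    have hMsum : M 0 + M 1 = 1 := by simpa [Fin.sum_univ_two] using hsum
    have hK0 : K 0 0 + K 0 1 = M 0 := by simpa [Fin.sum_univ_two] using hsumK 0
    have hK1 : K 1 0 + K 1 1 = M 1 := by simpa [Fin.sum_univ_two] using hsumK 1
    rw [Complex.ofReal_add, add_smul, ← h0, ← h1]
    rw [← hMsum, ← hK0, ← hK1]
    abel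
  have := congrFun (congrFun hall ⟨0, hd⟩) ⟨0, hd⟩
  simp only [Matrix.smul_apply, Matrix.one_apply_eq, smul_eq_mul, mul_one] at this
  exact_mod_cast this

set_option maxHeartbeats 1000000 in
theorem pguess_two_outcome_dim_d_upper_bound
    {d : ℕ} (hd : 0 < d)
    (M : Fin 2 → Matrix (Fin d) (Fin d) ℂ)
    (hpsd : ∀ x, (M x).PosSemidef) (hsum : ∑ x, M x = 1)
    (hord : (⨅ i, (hpsd 0).isHermitian.eigenvalues i) + (⨆ i, (hpsd 0).isHermitian.eigenvalues i)
      ≤ (⨅ i, (hpsd 1).isHermitian.eigenvalues i) + (⨆ i, (hpsd 1).isHermitian.eigenvalues i)) :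
    ∃ φ : Fin d → ℂ, star φ ⬝ᵥ φ = 1 ∧
      ∀ K : Fin 2 → Fin 2 → Matrix (Fin d) (Fin d) ℂ, IsDecomp M K →
        objective K φ ≤ 1 - (1 / 2) *
          (Real.sqrt (⨆ i, (hpsd 0).isHermitian.eigenvalues i)
            - Real.sqrt (⨅ i, (hpsd 0).isHermitian.eigenvalues i)) ^ 2 := by
  classical
  have hne : Nonempty (Fin d) := ⟨⟨0, hd⟩⟩
  set hH := (hpsd 0).isHermitian with hHdef
  obtain ⟨imin, hmin⟩ := Finite.exists_min hH.eigenvalues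
  obtain ⟨imax, hmax⟩ := Finite.exists_max hH.eigenvalues
  set a := ⨅ i, hH.eigenvalues i with ha_def
  set b := ⨆ i, hH.eigenvalues i with hb_def
  have hamin : a = hH.eigenvalues imin :=
    le_antisymm (ciInf_le (Finite.bddBelow_range _) imin) (le_ciInf hmin)
  have hbmax : b = hH.eigenvalues imax :=
    le_antisymm (ciSup_le hmax) (le_ciSup (Finite.bddAbove_range _) imax)
  have ha0 : 0 ≤ a := by rw [hamin]; exact (hpsd 0).eigenvalues_nonneg imin
  have hab : a ≤ b := by rw [hamin, hbmax]; exact hmin imax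
  have hb0 : 0 ≤ b := ha0.trans hab
  have hRHS : 1 - (1/2 : ℝ) * (Real.sqrt b - Real.sqrt a)^2
      = 1 - (a+b)/2 + Real.sqrt (a*b) := by
    rw [sub_sq, Real.sq_sqrt ha0, Real.sq_sqrt hb0, Real.sqrt_mul ha0]
    ring
  have hdot : ∀ i j : Fin d, star ⇑(hH.eigenvectorBasis i) ⬝ᵥ ⇑(hH.eigenvectorBasis j)
      = if i = j then 1 else 0 := by
    intro i j
    have h := orthonormal_iff_ite.mp hH.eigenvectorBasis.orthonormal i j
    rw [EuclideanSpace.inner_eq_star_dotProduct] at h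
    rw [dotProduct_comm]
    exact h
  rcases eq_or_lt_of_le hab with hEq | hLt
  · -- degenerate case a = b : any unit vector, bound is 1
    set φ := ⇑(hH.eigenvectorBasis imin) with hφ
    have hφ1 : star φ ⬝ᵥ φ = 1 := by simpa using hdot imin imin
    refine ⟨φ, hφ1, ?_⟩
    intro K hK
    obtain ⟨c₀, c₁, hc01, h0, h1, hM0⟩ := decomp_struct hd M hsum K hK
    have hsm : ∀ c : ℝ,
        (star φ ⬝ᵥ ((c:ℂ) • (1 : Matrix (Fin d) (Fin d) ℂ)).mulVec φ).re = c := by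
      intro c
      rw [Matrix.smul_mulVec, Matrix.one_mulVec, dotProduct_smul, hφ1]
      simp
    have hb00 : (star φ ⬝ᵥ (K 0 0).mulVec φ).re ≤ c₀ := by
      have hadd := congrArg (fun X : Matrix (Fin d) (Fin d) ℂ =>
        (star φ ⬝ᵥ X.mulVec φ).re) h0
      simp only [Matrix.add_mulVec, dotProduct_add, Complex.add_re] at hadd
      rw [hsm c₀] at hadd
      linarith [psd_re_nonneg (hK.1 1 0) φ, hadd]
    have hb11 : (star φ ⬝ᵥ (K 1 1).mulVec φ).re ≤ c₁ := by
      have hadd := congrArg (fun X : Matrix (Fin d) (Fin d) ℂ =>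
        (star φ ⬝ᵥ X.mulVec φ).re) h1
      simp only [Matrix.add_mulVec, dotProduct_add, Complex.add_re] at hadd
      rw [hsm c₁] at hadd
      linarith [psd_re_nonneg (hK.1 0 1) φ, hadd]
    have hobj : objective K φ ≤ 1 := by
      rw [objective, Fin.sum_univ_two]
      linarith
    rw [← hEq]
    simpa using hobj
  · -- main case a < b
    have hneq : imin ≠ imax := by
      intro h
      rw [hamin, hbmax, h] at hLt
      exact lt_irrefl _ hLt
    set u := ⇑(hH.eigenvectorBasis imin) with hu
    set v := ⇑(hH.eigenvectorBasis imax) with hv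
    have huu : star u ⬝ᵥ u = 1 := by simpa using hdot imin imin
    have hvv : star v ⬝ᵥ v = 1 := by simpa using hdot imax imax
    have huv : star u ⬝ᵥ v = 0 := by simpa [hneq] using hdot imin imax
    have hvu : star v ⬝ᵥ u = 0 := by simpa [hneq.symm] using hdot imax imin
    have hMu : (M 0).mulVec u = a • u := by rw [hamin]; exact hH.mulVec_eigenvectorBasis imin
    have hMv : (M 0).mulVec v = b • v := by rw [hbmax]; exact hH.mulVec_eigenvectorBasis imax
    set k : ℝ := (Real.sqrt 2)⁻¹ with hk
    set φ : Fin d → ℂ := (k : ℂ) • (u + v) with hφ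
    have hs2 : Real.sqrt 2 * Real.sqrt 2 = 2 := Real.mul_self_sqrt (by norm_num)
    have h2c : ((Real.sqrt 2 : ℝ):ℂ) * ((Real.sqrt 2 : ℝ):ℂ) = 2 := by
      rw [← Complex.ofReal_mul, hs2]; norm_num
    have hkk : (k:ℂ) * (k:ℂ) = (2:ℂ)⁻¹ := by
      rw [hk]
      push_cast
      rw [← mul_inv, h2c]
    have hφunit : star φ ⬝ᵥ φ = 1 := by
      have hexp : star φ ⬝ᵥ φ
          = (k:ℂ)*(k:ℂ) * (star u ⬝ᵥ u + star u ⬝ᵥ v + star v ⬝ᵥ u + star v ⬝ᵥ v) := by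
        rw [hφ]
        simp only [star_smul, star_add, smul_dotProduct, dotProduct_smul, dotProduct_add,
          add_dotProduct, smul_eq_mul, Complex.star_def, Complex.conj_ofReal]
        ring
      rw [hexp, huu, huv, hvu, hvv, hkk]
      norm_num
    have hφX : ∀ X : Matrix (Fin d) (Fin d) ℂ, (star φ ⬝ᵥ X.mulVec φ).re
        = ((star u ⬝ᵥ X.mulVec u).re + (star v ⬝ᵥ X.mulVec v).re
           + ((star u ⬝ᵥ X.mulVec v).re + (star v ⬝ᵥ X.mulVec u).re)) / 2 := by
      intro X
      have hexp : star φ ⬝ᵥ X.mulVec φ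
          = (k:ℂ)*(k:ℂ) * (star u ⬝ᵥ X.mulVec u + star v ⬝ᵥ X.mulVec v
            + (star u ⬝ᵥ X.mulVec v + star v ⬝ᵥ X.mulVec u)) := by
        rw [hφ]
        simp only [star_smul, star_add, Matrix.mulVec_smul, Matrix.mulVec_add,
          smul_dotProduct, dotProduct_smul, dotProduct_add, add_dotProduct, smul_eq_mul,
          Complex.star_def, Complex.conj_ofReal]
        ring
      rw [hexp, hkk, show (2:ℂ)⁻¹ = ((2⁻¹:ℝ):ℂ) by norm_num, Complex.re_ofReal_mul]
      simp only [Complex.add_re]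
      ring
    refine ⟨φ, hφunit, ?_⟩
    intro K hK
    obtain ⟨c₀, c₁, hc01, h0, h1, hM0⟩ := decomp_struct hd M hsum K hK
    set T := K 0 0 with hT
    have hTpsd : T.PosSemidef := hK.1 0 0
    have hK01 : K 0 1 = M 0 - T := eq_sub_of_add_eq' hM0
    have hK10 : K 1 0 = (c₀:ℂ) • 1 - T := eq_sub_of_add_eq' h0
    have hK11 : K 1 1 = (c₁:ℂ) • 1 - (M 0 - T) := by rw [← hK01]; exact eq_sub_of_add_eq' h1
    have hX1psd : (M 0 - T).PosSemidef := hK01 ▸ hK.1 0 1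
    have hX2psd : ((c₀:ℂ) • (1:Matrix (Fin d) (Fin d) ℂ) - T).PosSemidef := hK10 ▸ hK.1 1 0
    have hX3psd : ((c₁:ℂ) • (1:Matrix (Fin d) (Fin d) ℂ) - (M 0 - T)).PosSemidef :=
      hK11 ▸ hK.1 1 1
    set P := (star u ⬝ᵥ T.mulVec u).re with hP
    set Q := (star v ⬝ᵥ T.mulVec v).re with hQ
    -- components of M 0
    have hMuu : star u ⬝ᵥ (M 0).mulVec u = (a:ℂ) := by
      rw [hMu, dotProduct_smul, huu]
      simp [Complex.real_smul]
    have hMvv : star v ⬝ᵥ (M 0).mulVec v = (b:ℂ) := by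
      rw [hMv, dotProduct_smul, hvv]
      simp [Complex.real_smul]
    have hMuv : star u ⬝ᵥ (M 0).mulVec v = 0 := by
      rw [hMv, dotProduct_smul, huv]; simp
    have hMvu : star v ⬝ᵥ (M 0).mulVec u = 0 := by
      rw [hMu, dotProduct_smul, hvu]; simp
    -- components of c • 1
    have hIuu : ∀ c : ℝ,
        star u ⬝ᵥ ((c:ℂ) • (1:Matrix (Fin d) (Fin d) ℂ)).mulVec u = (c:ℂ) := by
      intro c
      rw [Matrix.smul_mulVec, Matrix.one_mulVec, dotProduct_smul, huu]; simp
    have hIvv : ∀ c : ℝ,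
        star v ⬝ᵥ ((c:ℂ) • (1:Matrix (Fin d) (Fin d) ℂ)).mulVec v = (c:ℂ) := by
      intro c
      rw [Matrix.smul_mulVec, Matrix.one_mulVec, dotProduct_smul, hvv]; simp
    have hIuv : ∀ c : ℝ,
        star u ⬝ᵥ ((c:ℂ) • (1:Matrix (Fin d) (Fin d) ℂ)).mulVec v = 0 := by
      intro c
      rw [Matrix.smul_mulVec, Matrix.one_mulVec, dotProduct_smul, huv]; simp
    have hIvu : ∀ c : ℝ,
        star v ⬝ᵥ ((c:ℂ) • (1:Matrix (Fin d) (Fin d) ℂ)).mulVec u = 0 := by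
      intro c
      rw [Matrix.smul_mulVec, Matrix.one_mulVec, dotProduct_smul, hvu]; simp
    -- components of X1 = M 0 - T
    have e1uu : (star u ⬝ᵥ (M 0 - T).mulVec u).re = a - P := by
      rw [Matrix.sub_mulVec, dotProduct_sub, Complex.sub_re, hMuu, ← hP]
      simp
    have e1vv : (star v ⬝ᵥ (M 0 - T).mulVec v).re = b - Q := by
      rw [Matrix.sub_mulVec, dotProduct_sub, Complex.sub_re, hMvv, ← hQ]
      simp
    have e1uv : (star u ⬝ᵥ (M 0 - T).mulVec v).re = -(star u ⬝ᵥ T.mulVec v).re := by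
      rw [Matrix.sub_mulVec, dotProduct_sub, Complex.sub_re, hMuv]
      simp
    have e1vu : (star v ⬝ᵥ (M 0 - T).mulVec u).re = -(star v ⬝ᵥ T.mulVec u).re := by
      rw [Matrix.sub_mulVec, dotProduct_sub, Complex.sub_re, hMvu]
      simp
    -- components of X2 = c₀ • 1 - T
    have e2uu : (star u ⬝ᵥ ((c₀:ℂ) • (1:Matrix (Fin d) (Fin d) ℂ) - T).mulVec u).re
        = c₀ - P := by
      rw [Matrix.sub_mulVec, dotProduct_sub, Complex.sub_re, hIuu c₀, ← hP]
      simp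
    have e2vv : (star v ⬝ᵥ ((c₀:ℂ) • (1:Matrix (Fin d) (Fin d) ℂ) - T).mulVec v).re
        = c₀ - Q := by
      rw [Matrix.sub_mulVec, dotProduct_sub, Complex.sub_re, hIvv c₀, ← hQ]
      simp
    have e2uv : (star u ⬝ᵥ ((c₀:ℂ) • (1:Matrix (Fin d) (Fin d) ℂ) - T).mulVec v).re
        = -(star u ⬝ᵥ T.mulVec v).re := by
      rw [Matrix.sub_mulVec, dotProduct_sub, Complex.sub_re, hIuv c₀]
      simp
    have e2vu : (star v ⬝ᵥ ((c₀:ℂ) • (1:Matrix (Fin d) (Fin d) ℂ) - T).mulVec u).re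
        = -(star v ⬝ᵥ T.mulVec u).re := by
      rw [Matrix.sub_mulVec, dotProduct_sub, Complex.sub_re, hIvu c₀]
      simp
    -- components of X3 = c₁ • 1 - (M 0 - T)
    have e3uu : (star u ⬝ᵥ ((c₁:ℂ) • (1:Matrix (Fin d) (Fin d) ℂ) - (M 0 - T)).mulVec u).re
        = c₁ - (a - P) := by
      rw [Matrix.sub_mulVec, dotProduct_sub, Complex.sub_re, hIuu c₁, e1uu]
      simp
    have e3vv : (star v ⬝ᵥ ((c₁:ℂ) • (1:Matrix (Fin d) (Fin d) ℂ) - (M 0 - T)).mulVec v).re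
        = c₁ - (b - Q) := by
      rw [Matrix.sub_mulVec, dotProduct_sub, Complex.sub_re, hIvv c₁, e1vv]
      simp
    have e3uv : (star u ⬝ᵥ ((c₁:ℂ) • (1:Matrix (Fin d) (Fin d) ℂ) - (M 0 - T)).mulVec v).re
        = (star u ⬝ᵥ T.mulVec v).re := by
      rw [Matrix.sub_mulVec, dotProduct_sub, Complex.sub_re, hIuv c₁, e1uv]
      simp
    have e3vu : (star v ⬝ᵥ ((c₁:ℂ) • (1:Matrix (Fin d) (Fin d) ℂ) - (M 0 - T)).mulVec u).re
        = (star v ⬝ᵥ T.mulVec u).re := by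
      rw [Matrix.sub_mulVec, dotProduct_sub, Complex.sub_re, hIvu c₁, e1vu]
      simp
    -- inequalities
    set R := (star u ⬝ᵥ T.mulVec v).re + (star v ⬝ᵥ T.mulVec u).re with hR
    have hP0 : 0 ≤ P := psd_re_nonneg hTpsd u
    have hQ0 : 0 ≤ Q := psd_re_nonneg hTpsd v
    have hPa : P ≤ a := by have := psd_re_nonneg hX1psd u; rw [e1uu] at this; linarith
    have hQb : Q ≤ b := by have := psd_re_nonneg hX1psd v; rw [e1vv] at this; linarith
    have hPc : P ≤ c₀ := by have := psd_re_nonneg hX2psd u; rw [e2uu] at this; linarith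
    have hQc : Q ≤ c₀ := by have := psd_re_nonneg hX2psd v; rw [e2vv] at this; linarith
    have hcs1 : R^2 ≤ 4 * (P * Q) := cs_of_psd hTpsd u v
    clear_value P Q R
    have hcs2 : R^2 ≤ 4 * ((a - P) * (b - Q)) := by
      have h := cs_of_psd hX1psd u v
      rw [e1uu, e1vv, e1uv, e1vu] at h
      calc R^2 = (-(star u ⬝ᵥ T.mulVec v).re + -(star v ⬝ᵥ T.mulVec u).re)^2 := by
            rw [hR]; ring
        _ ≤ _ := h
    have hcs3 : R^2 ≤ 4 * ((c₀ - P) * (c₀ - Q)) := by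
      have h := cs_of_psd hX2psd u v
      rw [e2uu, e2vv, e2uv, e2vu] at h
      calc R^2 = (-(star u ⬝ᵥ T.mulVec v).re + -(star v ⬝ᵥ T.mulVec u).re)^2 := by
            rw [hR]; ring
        _ ≤ _ := h
    have hkey : P + Q + 2 * (R/2) ≤ c₀ + Real.sqrt (a*b) :=
      scalar_key ha0 hPa hQb hP0 hQ0 hPc hQc
        (by nlinarith [hcs1]) (by nlinarith [hcs2]) (by nlinarith [hcs3])
    -- objective value
    have hobj : objective K φ = c₁ - (a+b)/2 + (P + Q + R) := by
      rw [objective, Fin.sum_univ_two, ← hT, hK11, hφX T,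
        hφX ((c₁:ℂ) • (1:Matrix (Fin d) (Fin d) ℂ) - (M 0 - T)), e3uu, e3vv, e3uv, e3vu,
        ← hP, ← hQ]
      rw [hR]
      ring
    rw [hRHS, hobj]
    linarith [hkey]
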